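/- Covering-number cardinality bound: with N = N(θ) ≥ 2, the sets E_k defined by E₁ = V₁, E_k = S E_{k−1} ∪ V_k with card(V_k) ≤ N^k satisfy card(E_k) ≤ N + N² + ⋯ + N^k, and consequently N_ε(∪_k E_k, V) ≤ (2 + N) N^n whenever θ^n K R ≤ ε < θ^{n−1} K R, which yields dim_F(∪_k E_k, V) ≤ −ln N / ln θ. -/

import Mathlib

open Set Filter Metric
open Topology

/-- The minimal number of `ε`-balls needed to cover `A`, as a real number. -/
noncomputable def coverN {X : Type*} [MetricSpace X] (A : Set X) (ε : ℝ) : ℝ :=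
  sInf {r : ℝ | ∃ s : Finset X, (s.card : ℝ) = r ∧ A ⊆ ⋃ x ∈ s, Metric.ball x ε}

/-- The fractal (box-counting) dimension:
`dim_F(A) = limsup_{ε→0⁺} log N_ε(A) / log(1/ε)`. -/
noncomputable def fractalDim {X : Type*} [MetricSpace X] (A : Set X) : ℝ :=
  limsup (fun ε : ℝ => Real.log (coverN A ε) / Real.log (1 / ε)) (nhdsWithin 0 (Ioi 0))

lemma coverN_nonneg {X : Type*} [MetricSpace X] (A : Set X) (ε : ℝ) : 0 ≤ coverN A ε :=
  Real.sInf_nonneg fun r hr => by obtain ⟨s, h, _⟩ := hr; exact h ▸ Nat.cast_nonneg _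

lemma log_coverN_nonneg {X : Type*} [MetricSpace X] (A : Set X) (ε : ℝ) :
    0 ≤ Real.log (coverN A ε) := by
  set T := {r : ℝ | ∃ s : Finset X, (s.card : ℝ) = r ∧ A ⊆ ⋃ x ∈ s, Metric.ball x ε} with hT
  have hnn : ∀ r ∈ T, (0:ℝ) ≤ r := fun r hr => by
    obtain ⟨s, h, _⟩ := hr; exact h ▸ Nat.cast_nonneg _
  rcases T.eq_empty_or_nonempty with h | h
  · rw [coverN, ← hT, h, Real.sInf_empty, Real.log_zero]
  · by_cases h0 : (0:ℝ) ∈ T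
    · have h1 : sInf T ≤ 0 := csInf_le ⟨0, hnn⟩ h0
      have h2 : 0 ≤ sInf T := Real.sInf_nonneg hnn
      rw [coverN, ← hT, le_antisymm h1 h2, Real.log_zero]
    · have h1 : (1:ℝ) ≤ sInf T := by
        refine le_csInf h fun r hr => ?_
        obtain ⟨s, hcard, hc⟩ := hr
        rcases Nat.eq_zero_or_pos s.card with hz | hp
        · exact absurd ⟨s, by rw [hz, Nat.cast_zero], hc⟩ h0
        · rw [← hcard]; exact_mod_cast hp
      rw [coverN, ← hT]
      exact Real.log_nonneg h1

/-- Covering-number cardinality bound in the exponential-attractor construction: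
with `N ≥ 2`, `E₁ = V₁`, `E_k = S E_{k−1} ∪ V_k`, `card(V_k) ≤ N^k`, one has
`card(E_k) ≤ N + N² + ⋯ + N^k`; consequently
`N_ε(∪_k E_k, V) ≤ (2 + N) N^n` whenever `θ^n K R ≤ ε < θ^{n−1} K R`,
which yields `dim_F(∪_k E_k, V) ≤ −ln N / ln θ`. -/
theorem covering_cardinality_bound {V : Type*} [NormedAddCommGroup V] [DecidableEq V]
    (S : V → V) (θ K R : ℝ) (hθ : θ ∈ Ioo (0 : ℝ) 1) (hK : 0 < K) (hR : 0 < R)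
    (N : ℕ) (hN : 2 ≤ N)
    (Vk Ek : ℕ → Finset V)
    (hcard : ∀ k ≥ 1, (Vk k).card ≤ N ^ k)
    (hE1 : Ek 1 = Vk 1)
    (hEk : ∀ k ≥ 2, Ek k = (Ek (k - 1)).image S ∪ Vk k)
    (hcover : ∀ n ≥ 1, (⋃ k ∈ {j : ℕ | n ≤ j}, (Ek k : Set V)) ⊆
      ⋃ h ∈ Vk n, Metric.ball h (θ ^ n * K * R)) :
    (∀ k ≥ 1, ((Ek k).card : ℝ) ≤ ∑ i ∈ Finset.Icc 1 k, (N : ℝ) ^ i) ∧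
    (∀ n ≥ 1, ∀ ε : ℝ, θ ^ n * K * R ≤ ε → ε < θ ^ (n - 1) * K * R →
      coverN (⋃ k ∈ {j : ℕ | 1 ≤ j}, (Ek k : Set V)) ε ≤ (2 + (N : ℝ)) * (N : ℝ) ^ n) ∧
    fractalDim (⋃ k ∈ {j : ℕ | 1 ≤ j}, (Ek k : Set V)) ≤
      -Real.log N / Real.log θ := by
  classical
  obtain ⟨hθ0, hθ1⟩ := hθ
  have hKR : 0 < K * R := mul_pos hK hR
  set A := ⋃ k ∈ {j : ℕ | 1 ≤ j}, (Ek k : Set V) with hA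
  -- Part 1, ℕ version
  have part1nat : ∀ k, 1 ≤ k → (Ek k).card ≤ ∑ i ∈ Finset.Icc 1 k, N ^ i := by
    intro k hk
    induction k, hk using Nat.le_induction with
    | base => rw [hE1]; simpa using hcard 1 le_rfl
    | succ k hk ih =>
      rw [hEk (k + 1) (by omega)]
      simp only [Nat.add_sub_cancel]
      calc ((Ek k).image S ∪ Vk (k + 1)).card
          ≤ ((Ek k).image S).card + (Vk (k + 1)).card := Finset.card_union_le _ _
        _ ≤ (Ek k).card + N ^ (k + 1) :=
            add_le_add Finset.card_image_le (hcard _ (by omega))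
        _ ≤ (∑ i ∈ Finset.Icc 1 k, N ^ i) + N ^ (k + 1) := add_le_add_left ih _
        _ = ∑ i ∈ Finset.Icc 1 (k + 1), N ^ i :=
            (Finset.sum_Icc_succ_top (by omega) _).symm
  have part1 : ∀ k ≥ 1, ((Ek k).card : ℝ) ≤ ∑ i ∈ Finset.Icc 1 k, (N : ℝ) ^ i := by
    intro k hk
    exact_mod_cast part1nat k hk
  -- geometric bounds
  have aux1 : ∀ k : ℕ, ∑ i ∈ Finset.Icc 1 k, N ^ i ≤ N ^ (k + 1) := by
    intro k
    induction k with
    | zero => simp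
    | succ k ih =>
      rw [Finset.sum_Icc_succ_top (by omega)]
      have h2 : 2 * N ^ (k + 1) ≤ N * N ^ (k + 1) := Nat.mul_le_mul_right _ hN
      calc (∑ i ∈ Finset.Icc 1 k, N ^ i) + N ^ (k + 1)
          ≤ N ^ (k + 1) + N ^ (k + 1) := add_le_add_left ih _
        _ = 2 * N ^ (k + 1) := by ring
        _ ≤ N * N ^ (k + 1) := h2
        _ = N ^ (k + 2) := by ring
  have aux2 : ∀ m : ℕ, ∑ k ∈ Finset.Icc 1 m, N ^ (k + 1) ≤ 2 * N ^ (m + 1) := by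
    intro m
    induction m with
    | zero => simp
    | succ m ih =>
      rw [Finset.sum_Icc_succ_top (by omega)]
      have h2 : 2 * N ^ (m + 1) ≤ N ^ (m + 2) := by
        calc 2 * N ^ (m + 1) ≤ N * N ^ (m + 1) := Nat.mul_le_mul_right _ hN
          _ = N ^ (m + 2) := by ring
      calc (∑ k ∈ Finset.Icc 1 m, N ^ (k + 1)) + N ^ (m + 1 + 1)
          ≤ 2 * N ^ (m + 1) + N ^ (m + 2) := add_le_add_left ih _
        _ ≤ N ^ (m + 2) + N ^ (m + 2) := add_le_add_left h2 _
        _ = 2 * N ^ (m + 2) := by ring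
  -- Part 2
  have part2 : ∀ n ≥ 1, ∀ ε : ℝ, θ ^ n * K * R ≤ ε → ε < θ ^ (n - 1) * K * R →
      coverN A ε ≤ (2 + (N : ℝ)) * (N : ℝ) ^ n := by
    intro n hn ε hε1 hε2
    have hε0 : 0 < ε := lt_of_lt_of_le (by positivity) hε1
    set s : Finset V := (Finset.Icc 1 (n - 1)).biUnion Ek ∪ Vk n with hs
    have hsub : A ⊆ ⋃ x ∈ s, Metric.ball x ε := by
      intro x hx
      rw [hA] at hx
      simp only [Set.mem_iUnion, Set.mem_setOf_eq, exists_prop] at hx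
      obtain ⟨k, hk1, hxk⟩ := hx
      by_cases hkn : n ≤ k
      · have hx' : x ∈ ⋃ k ∈ {j : ℕ | n ≤ j}, (Ek k : Set V) := by
          simp only [Set.mem_iUnion, Set.mem_setOf_eq, exists_prop]
          exact ⟨k, hkn, hxk⟩
        have h2 := hcover n hn hx'
        simp only [Set.mem_iUnion, exists_prop] at h2 ⊢
        obtain ⟨h, hh, hball⟩ := h2
        exact ⟨h, Finset.mem_union_right _ hh, Metric.ball_subset_ball hε1 hball⟩
      · push_neg at hkn
        simp only [Set.mem_iUnion, exists_prop]
        refine ⟨x, Finset.mem_union_left _ ?_, Metric.mem_ball_self hε0⟩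
        exact Finset.mem_biUnion.2 ⟨k, Finset.mem_Icc.2 ⟨hk1, by omega⟩, hxk⟩
    have hbdd : BddBelow {r : ℝ | ∃ s' : Finset V,
        (s'.card : ℝ) = r ∧ A ⊆ ⋃ x ∈ s', Metric.ball x ε} :=
      ⟨0, fun r hr => by obtain ⟨s', h1, _⟩ := hr; exact h1 ▸ Nat.cast_nonneg _⟩
    have h1 : coverN A ε ≤ (s.card : ℝ) := csInf_le hbdd ⟨s, rfl, hsub⟩
    have h2 : s.card ≤ (2 + N) * N ^ n := by
      calc s.card ≤ ((Finset.Icc 1 (n - 1)).biUnion Ek).card + (Vk n).card :=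
            Finset.card_union_le _ _
        _ ≤ (∑ k ∈ Finset.Icc 1 (n - 1), (Ek k).card) + N ^ n :=
            add_le_add Finset.card_biUnion_le (hcard n hn)
        _ ≤ (∑ k ∈ Finset.Icc 1 (n - 1), N ^ (k + 1)) + N ^ n := by
            refine add_le_add_left (Finset.sum_le_sum fun k hk => ?_) _
            exact (part1nat k (Finset.mem_Icc.1 hk).1).trans (aux1 k)
        _ ≤ 2 * N ^ (n - 1 + 1) + N ^ n := add_le_add_left (aux2 _) _
        _ = 3 * N ^ n := by rw [Nat.sub_add_cancel hn]; ring
        _ ≤ (2 + N) * N ^ n := Nat.mul_le_mul_right _ (by omega)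
    calc coverN A ε ≤ (s.card : ℝ) := h1
      _ ≤ (((2 + N) * N ^ n : ℕ) : ℝ) := by exact_mod_cast h2
      _ = (2 + (N : ℝ)) * (N : ℝ) ^ n := by push_cast; ring
  refine ⟨part1, part2, ?_⟩
  -- Part 3
  have hlogθ : Real.log θ < 0 := Real.log_neg hθ0 hθ1
  have hN1 : (1:ℝ) < N := by exact_mod_cast (by omega : 1 < N)
  have hlogN : 0 < Real.log N := Real.log_pos hN1
  set B : ℝ := Real.log N / Real.log θ with hB
  set C : ℝ := Real.log (2 + (N:ℝ)) + Real.log N - Real.log (K * R) * B with hC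
  clear_value B
  clear_value C
  set g : ℝ → ℝ := fun ε => (C + B * Real.log ε) / (-Real.log ε) with hg
  set f : ℝ → ℝ := fun ε => Real.log (coverN A ε) / Real.log (1 / ε) with hf
  have hIoo : Set.Ioo (0:ℝ) (min 1 (K * R)) ∈ nhdsWithin (0:ℝ) (Ioi 0) :=
    Ioo_mem_nhdsGT_of_mem ⟨le_refl 0, lt_min one_pos hKR⟩
  have hev0 : ∀ᶠ ε in nhdsWithin (0:ℝ) (Ioi 0), (0:ℝ) ≤ f ε := by
    filter_upwards [hIoo] with ε hε
    have hε1 : ε < 1 := lt_of_lt_of_le hε.2 (min_le_left _ _)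
    have hd : 0 ≤ Real.log (1 / ε) := by
      rw [one_div, Real.log_inv]
      linarith [Real.log_neg hε.1 hε1]
    exact div_nonneg (log_coverN_nonneg A ε) hd
  have hev : ∀ᶠ ε in nhdsWithin (0:ℝ) (Ioi 0), f ε ≤ g ε := by
    filter_upwards [hIoo] with ε hε
    obtain ⟨hε0, hεlt⟩ := hε
    have hε1 : ε < 1 := lt_of_lt_of_le hεlt (min_le_left _ _)
    have hεKR : ε < K * R := lt_of_lt_of_le hεlt (min_le_right _ _)
    have hlogε : Real.log ε < 0 := Real.log_neg hε0 hε1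
    obtain ⟨m, hm⟩ := exists_pow_lt_of_lt_one (div_pos hε0 hKR) hθ1
    have hex : ∃ n : ℕ, θ ^ n * K * R ≤ ε :=
      ⟨m, by rw [mul_assoc]; exact ((lt_div_iff₀ hKR).1 hm).le⟩
    set n := Nat.find hex with hn
    have hspec : θ ^ n * K * R ≤ ε := Nat.find_spec hex
    have hn1 : 1 ≤ n := by
      rcases Nat.eq_zero_or_pos n with h0 | h0
      · exfalso
        have h5 := hspec
        rw [h0, pow_zero, one_mul] at h5
        linarith
      · exact h0
    have hupper : ε < θ ^ (n - 1) * K * R :=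
      lt_of_not_ge (Nat.find_min hex (show n - 1 < n by omega))
    have hcov := part2 n hn1 ε hspec hupper
    have hNn1 : (1:ℝ) ≤ (2 + (N:ℝ)) * (N:ℝ) ^ n := by
      have h1 : (1:ℝ) ≤ (N:ℝ) ^ n := one_le_pow₀ hN1.le
      nlinarith
    have hlog1 : Real.log (coverN A ε) ≤ Real.log ((2 + (N:ℝ)) * (N:ℝ) ^ n) := by
      rcases eq_or_lt_of_le (coverN_nonneg A ε) with h | h
      · rw [← h, Real.log_zero]
        exact Real.log_nonneg hNn1
      · exact Real.log_le_log h hcov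
    have hlog2 : Real.log ((2 + (N:ℝ)) * (N:ℝ) ^ n)
        = Real.log (2 + (N:ℝ)) + n * Real.log N := by
      rw [Real.log_mul (by positivity) (by positivity), Real.log_pow]
    have hcast : ((n - 1 : ℕ) : ℝ) = (n:ℝ) - 1 := by
      rw [Nat.cast_sub hn1, Nat.cast_one]
    have ht : Real.log ε < ((n:ℝ) - 1) * Real.log θ + Real.log (K * R) := by
      have h3 : ε < θ ^ (n - 1) * (K * R) := by rw [← mul_assoc]; exact hupper
      have h4 := Real.log_lt_log hε0 h3
      rwa [Real.log_mul (pow_ne_zero _ (ne_of_gt hθ0)) (ne_of_gt hKR),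
        Real.log_pow, hcast] at h4
    have h5 : (n:ℝ) - 1 ≤ (Real.log ε - Real.log (K * R)) / Real.log θ := by
      rw [le_div_iff_of_neg hlogθ]
      linarith
    have hnle : (n:ℝ) * Real.log N
        ≤ (1 + (Real.log ε - Real.log (K * R)) / Real.log θ) * Real.log N := by
      have := mul_le_mul_of_nonneg_right (by linarith : (n:ℝ) ≤ 1 + (Real.log ε - Real.log (K * R)) / Real.log θ) hlogN.le
      linarith
    have hL : 0 < -Real.log ε := by linarith
    have hnum : Real.log (coverN A ε) ≤ C + B * Real.log ε := by
      calc Real.log (coverN A ε) ≤ Real.log (2 + (N:ℝ)) + n * Real.log N := by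
            rw [← hlog2]; exact hlog1
        _ ≤ Real.log (2 + (N:ℝ))
            + (1 + (Real.log ε - Real.log (K * R)) / Real.log θ) * Real.log N := by
            linarith
        _ = C + B * Real.log ε := by rw [hC, hB]; ring
    show Real.log (coverN A ε) / Real.log (1 / ε) ≤ (C + B * Real.log ε) / (-Real.log ε)
    rw [one_div, Real.log_inv]
    gcongr
  have hinv : Tendsto (fun t : ℝ => t⁻¹) atBot (𝓝 (0:ℝ)) := by
    have h : Tendsto (fun t : ℝ => -(-t)⁻¹) atBot (𝓝 (-0)) :=
      Tendsto.neg (Tendsto.comp tendsto_inv_atTop_zero tendsto_neg_atBot_atTop)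
    simpa [inv_neg] using h
  have hgt : Tendsto g (nhdsWithin (0:ℝ) (Ioi 0)) (𝓝 (-B)) := by
    have h1 : Tendsto (fun t : ℝ => (C + B * t) / (-t)) atBot (𝓝 (-B)) := by
      have h2 : Tendsto (fun t : ℝ => -(C * t⁻¹) - B) atBot (𝓝 (-B)) := by
        have h3 := ((hinv.const_mul C).neg).sub_const B
        simpa using h3
      refine Tendsto.congr' ?_ h2
      filter_upwards [eventually_lt_atBot (0:ℝ)] with t htlt
      have htne : t ≠ 0 := ne_of_lt htlt
      have hdiv : (C + B * t) / (-t) = -(C * t⁻¹) - B := by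
        rw [div_neg, add_div, mul_div_assoc, div_self htne, mul_one, neg_add,
          div_eq_mul_inv, ← sub_eq_add_neg]
      exact hdiv.symm
    exact h1.comp Real.tendsto_log_nhdsGT_zero
  have hbound : limsup f (nhdsWithin (0:ℝ) (Ioi 0)) ≤ limsup g (nhdsWithin (0:ℝ) (Ioi 0)) :=
    limsup_le_limsup hev (isCoboundedUnder_le_of_eventually_le _ hev0) hgt.isBoundedUnder_le
  have hgeq : limsup g (nhdsWithin (0:ℝ) (Ioi 0)) = -B := hgt.limsup_eq
  have hfd : fractalDim A = limsup f (nhdsWithin (0:ℝ) (Ioi 0)) := rfl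
  rw [hfd]
  calc limsup f (nhdsWithin (0:ℝ) (Ioi 0)) ≤ -B := hgeq ▸ hbound
    _ = -Real.log N / Real.log θ := by rw [hB, neg_div]
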